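/- Let X be an irreducible recurrent Markov chain with transition probabilities p, let A ⊂ S, x ∈ S, and y ∈ A. Then P^x(X_{τ⁺_A} = y) = p(x,y) + Σ_{z ∈ S∖A} [P^x(τ⁺_z < τ⁺_A) / P^z(τ⁺_A < τ⁺_z)] · p(z,y). -/

import Mathlib

open MeasureTheory Filter Set Topology
open scoped ENNReal

/-- A discrete-time Markov chain: a transition matrix `p` together with the family
of path measures `P x` (chain started at `x`), characterized on cylinder sets. -/
structure MC (S : Type*) [MeasurableSpace S] where
  p : S → S → ℝ≥0∞
  rowSum : ∀ x, ∑' y, p x y = 1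
  P : S → Measure (ℕ → S)
  prob : ∀ x, IsProbabilityMeasure (P x)
  start : ∀ x, P x {ω | ω 0 = x} = 1
  cyl : ∀ (γ : ℕ → S) (n : ℕ),
    P (γ 0) {ω | ∀ i ≤ n + 1, ω i = γ i}
      = P (γ 0) {ω | ∀ i ≤ n, ω i = γ i} * p (γ n) (γ (n + 1))

variable {S : Type*} [MeasurableSpace S]

/-- Return time `τ⁺_A = inf {n > 0 : X_n ∈ A}`, with value `⊤` if the set is never hit. -/
noncomputable def tauP (A : Set S) (ω : ℕ → S) : ℕ∞ :=
  sInf ((fun k : ℕ => (k : ℕ∞)) '' {k | 0 < k ∧ ω k ∈ A})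

/-- Hitting time `τ_A = inf {n ≥ 0 : X_n ∈ A}`. -/
noncomputable def tau (A : Set S) (ω : ℕ → S) : ℕ∞ :=
  sInf ((fun k : ℕ => (k : ℕ∞)) '' {k | ω k ∈ A})

/-- The event `X_{τ⁺_A} = y`. -/
def hitAtP (A : Set S) (y : S) : Set (ℕ → S) :=
  {ω | ∃ k : ℕ, tauP A ω = (k : ℕ∞) ∧ ω k = y}

/-- The event `X_{τ_A} = y`. -/
def hitAt (A : Set S) (y : S) : Set (ℕ → S) :=
  {ω | ∃ k : ℕ, tau A ω = (k : ℕ∞) ∧ ω k = y}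

def MCIrreducible (M : MC S) : Prop := ∀ x y : S, ∃ n : ℕ, 0 < M.P x {ω | ω n = y}

def MCRecurrent (M : MC S) : Prop := ∀ x : S, M.P x {ω | tauP {x} ω ≠ ⊤} = 1

/-- `E^z[τ⁺_x]`, the expected return time to `x` starting from `z`. -/
noncomputable def retExp (M : MC S) (z x : S) : ℝ≥0∞ :=
  ∫⁻ ω, ((tauP {x} ω : ℕ∞) : ℝ≥0∞) ∂ M.P z

def MCPositiveRecurrent (M : MC S) : Prop := ∀ x : S, retExp M x x < ⊤

def MCStationary (M : MC S) (μ : S → ℝ≥0∞) : Prop :=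
  (∑' x, μ x = 1) ∧ ∀ y, ∑' x, μ x * M.p x y = μ y

namespace MCaux

/-! ### tauP lemmas -/

lemma tauP_eq_top_iff {A : Set S} {ω : ℕ → S} :
    tauP A ω = ⊤ ↔ ∀ k : ℕ, 0 < k → ω k ∉ A := by
  rw [tauP, sInf_eq_top]
  constructor
  · intro h k hk hA
    have := h _ ⟨k, ⟨hk, hA⟩, rfl⟩
    exact (ENat.coe_ne_top k) this
  · rintro h a ⟨k, ⟨hk, hA⟩, rfl⟩
    exact absurd hA (h k hk)

lemma tauP_eq_coe {A : Set S} {ω : ℕ → S} {k : ℕ} (hk : 0 < k) (hA : ω k ∈ A)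
    (hmin : ∀ j, 0 < j → j < k → ω j ∉ A) : tauP A ω = (k : ℕ∞) := by
  refine IsLeast.csInf_eq ⟨⟨k, ⟨hk, hA⟩, rfl⟩, ?_⟩
  rintro a ⟨j, ⟨hj, hjA⟩, rfl⟩
  have : k ≤ j := by
    by_contra h
    exact hmin j hj (Nat.lt_of_not_le h) hjA
  show ((k:ℕ):ℕ∞) ≤ ((j:ℕ):ℕ∞)
  exact_mod_cast this

lemma tauP_spec {A : Set S} {ω : ℕ → S} {k : ℕ} (h : tauP A ω = (k : ℕ∞)) :
    0 < k ∧ ω k ∈ A ∧ ∀ j, 0 < j → j < k → ω j ∉ A := by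
  by_cases hs : ∃ j : ℕ, 0 < j ∧ ω j ∈ A
  · obtain ⟨j, hj⟩ := hs
    let s : Set ℕ := {k | 0 < k ∧ ω k ∈ A}
    have hne : s.Nonempty := ⟨j, hj⟩
    have hmem := Nat.sInf_mem hne
    have heq : tauP A ω = ((sInf s : ℕ) : ℕ∞) := by
      refine tauP_eq_coe hmem.1 hmem.2 (fun i hi hilt hiA => ?_)
      exact absurd (Nat.sInf_le (⟨hi, hiA⟩ : i ∈ s)) (Nat.not_le.mpr hilt)
    rw [heq] at h
    have : sInf s = k := by exact_mod_cast h
    subst this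
    exact ⟨hmem.1, hmem.2, fun i hi hilt hiA =>
      absurd (Nat.sInf_le (⟨hi, hiA⟩ : i ∈ s)) (Nat.not_le.mpr hilt)⟩
  · push_neg at hs
    have : tauP A ω = ⊤ := tauP_eq_top_iff.mpr hs
    rw [this] at h
    exact absurd h.symm (ENat.coe_ne_top k)

lemma lt_tauP_iff {A : Set S} {ω : ℕ → S} {k : ℕ} :
    (k : ℕ∞) < tauP A ω ↔ ∀ j, 0 < j → j ≤ k → ω j ∉ A := by
  constructor
  · intro h j hj hjk hjA
    have : tauP A ω ≤ (j : ℕ∞) := sInf_le ⟨j, ⟨hj, hjA⟩, rfl⟩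
    have : tauP A ω ≤ (k : ℕ∞) := this.trans (by exact_mod_cast hjk)
    exact absurd h (not_lt.mpr this)
  · intro h
    have : ((k + 1 : ℕ) : ℕ∞) ≤ tauP A ω := by
      refine le_sInf ?_
      rintro a ⟨j, ⟨hj, hjA⟩, rfl⟩
      have hj1 : k + 1 ≤ j := by
        by_contra hc
        exact h j hj (by omega) hjA
      show ((k+1:ℕ):ℕ∞) ≤ ((j:ℕ):ℕ∞)
      exact_mod_cast hj1
    refine lt_of_lt_of_le ?_ this
    exact_mod_cast Nat.lt_succ_self k

lemma tauP_ne_top_iff {A : Set S} {ω : ℕ → S} :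
    tauP A ω ≠ ⊤ ↔ ∃ k : ℕ, 0 < k ∧ ω k ∈ A := by
  rw [Ne, tauP_eq_top_iff]; push_neg; rfl

/-! ### cylinders and weights -/

noncomputable def wt (M : MC S) : S → List S → ℝ≥0∞
  | _, [] => 1
  | a, b :: l => M.p a b * wt M b l

@[simp] lemma wt_nil (M : MC S) (a : S) : wt M a [] = 1 := rfl

@[simp] lemma wt_cons (M : MC S) (a b : S) (l : List S) :
    wt M a (b :: l) = M.p a b * wt M b l := rfl

def cylL (l : List S) : Set (ℕ → S) := {ω | ∀ i : ℕ, ∀ h : i < l.length, ω i = l.get ⟨i, h⟩}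

def extL (l : List S) (d : S) : ℕ → S := fun i => l.getD i d

lemma measure_cylN (M : MC S) (γ : ℕ → S) (n : ℕ) :
    M.P (γ 0) {ω | ∀ i ≤ n, ω i = γ i} = ∏ i ∈ Finset.range n, M.p (γ i) (γ (i + 1)) := by
  induction n with
  | zero =>
      have : {ω : ℕ → S | ∀ i ≤ 0, ω i = γ i} = {ω : ℕ → S | ω 0 = γ 0} := by
        ext ω; constructor
        · intro h; exact h 0 le_rfl
        · intro h i hi
          have : i = 0 := Nat.le_zero.mp hi
          subst this; exact h
      rw [this, M.start, Finset.prod_range_zero]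
  | succ n ih => rw [M.cyl γ n, ih, Finset.prod_range_succ]


lemma wt_eq_prod (M : MC S) (a : S) (l : List S) :
    wt M a l = ∏ i ∈ Finset.range l.length, M.p (extL (a :: l) a i) (extL (a :: l) a (i + 1)) := by
  induction l generalizing a with
  | nil => simp
  | cons b t ih =>
      have hlen : (b :: t).length = t.length + 1 := rfl
      rw [wt_cons, hlen, Finset.prod_range_succ', ih b]
      have h0 : extL (a :: b :: t) a 0 = a := rfl
      have h1 : extL (a :: b :: t) a 1 = b := rfl
      rw [h0, h1, mul_comm]
      congr 1
      refine Finset.prod_congr rfl (fun i hi => ?_)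
      have hi' : i < t.length := Finset.mem_range.mp hi
      have e1 : extL (a :: b :: t) a (i + 1) = extL (b :: t) b i := by
        show (b :: t).getD i a = (b :: t).getD i b
        rw [List.getD_eq_getElem _ _ (by simpa using Nat.lt_succ_of_lt hi'),
            List.getD_eq_getElem _ _ (by simpa using Nat.lt_succ_of_lt hi')]
      have e2 : extL (a :: b :: t) a (i + 2) = extL (b :: t) b (i + 1) := by
        show (b :: t).getD (i+1) a = (b :: t).getD (i+1) b
        rw [List.getD_eq_getElem _ _ (by simpa using Nat.succ_lt_succ hi'),
            List.getD_eq_getElem _ _ (by simpa using Nat.succ_lt_succ hi')]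
      rw [e1, e2]

lemma cylL_eq_cylN (a : S) (l : List S) :
    cylL (a :: l) = {ω : ℕ → S | ∀ i ≤ l.length, ω i = extL (a :: l) a i} := by
  ext ω
  constructor
  · intro h i hi
    have hlt : i < (a :: l).length := by simp; omega
    rw [h i hlt]
    show _ = (a :: l).getD i a
    rw [List.getD_eq_getElem _ _ hlt]
    rfl
  · intro h i hlt
    have hi : i ≤ l.length := by simp at hlt; omega
    rw [h i hi]
    show (a :: l).getD i a = _
    rw [List.getD_eq_getElem _ _ hlt]
    rfl

lemma measure_cylL (M : MC S) (a : S) (l : List S) :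
    M.P a (cylL (a :: l)) = wt M a l := by
  have h0 : extL (a :: l) a 0 = a := rfl
  rw [cylL_eq_cylN, wt_eq_prod M a l]
  conv_lhs => rw [← h0]
  exact measure_cylN M (extL (a :: l) a) l.length

lemma measure_cylL_ne (M : MC S) (hm : ∀ s : Set S, MeasurableSet s) (a w : S) (l : List S)
    (h : w ≠ a) : M.P a (cylL (w :: l)) = 0 := by
  have hmeas : MeasurableSet {ω : ℕ → S | ω 0 = a} := by
    exact measurable_pi_apply (X := fun _ : ℕ => S) 0 (hm {a})
  have hc : M.P a {ω : ℕ → S | ω 0 = a}ᶜ = 0 := by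
    have := M.prob a
    rw [prob_compl_eq_one_sub hmeas, M.start a, tsub_self]
  refine measure_mono_null ?_ hc
  intro ω hω
  have h0 : ω 0 = w := by
    have := hω 0 (by simp)
    simpa using this
  simp only [Set.mem_compl_iff, Set.mem_setOf_eq, h0]
  exact h

lemma measurable_cylL (hm : ∀ s : Set S, MeasurableSet s) (l : List S) :
    MeasurableSet (cylL (l : List S)) := by
  have : cylL l = ⋂ i : Fin l.length, {ω : ℕ → S | ω i ∈ ({l.get i} : Set S)} := by
    ext ω
    simp only [cylL, Set.mem_setOf_eq, Set.mem_iInter, Set.mem_singleton_iff]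
    constructor
    · intro h i; exact h i i.2
    · intro h i hi; exact h ⟨i, hi⟩
  rw [this]
  exact MeasurableSet.iInter (fun i => measurable_pi_apply (X := fun _ : ℕ => S) (i : ℕ) (hm _))


/-! ### discreteness from recurrence -/

open scoped Classical in
noncomputable def swapF (x y : S) : S → S := fun s => if s = x then y else if s = y then x else s

open scoped Classical in
noncomputable def tmap (x y : S) (T : Set ℕ) : (ℕ → S) → (ℕ → S) :=
  fun ω i => if i ∈ T then swapF x y (ω i) else ω i

def Insep (x y : S) : Prop := ∀ B : Set S, MeasurableSet B → (x ∈ B ↔ y ∈ B)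

lemma swapF_mem {x y : S} (hxy : Insep x y) {B : Set S} (hB : MeasurableSet B) (s : S) :
    swapF x y s ∈ B ↔ s ∈ B := by
  unfold swapF
  split_ifs with h1 h2
  · subst h1; exact (hxy B hB).symm
  · subst h2; exact hxy B hB
  · rfl

lemma swapF_invol (x y : S) (s : S) : swapF x y (swapF x y s) = s := by
  classical
  unfold swapF
  by_cases h1 : s = x
  · subst h1
    rw [if_pos rfl]
    by_cases hyx : y = s
    · rw [if_pos hyx, hyx]
    · rw [if_neg hyx, if_pos rfl]
  · by_cases h2 : s = y
    · subst h2
      rw [if_neg h1, if_pos rfl, if_pos rfl]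
    · rw [if_neg h1, if_neg h2, if_neg h1, if_neg h2]

lemma tmap_invol (x y : S) (T : Set ℕ) (ω : ℕ → S) : tmap x y T (tmap x y T ω) = ω := by
  funext i
  by_cases h : i ∈ T
  · simp [tmap, h, swapF_invol]
  · simp [tmap, h]

lemma tmap_preimage_eq {x y : S} (hxy : Insep x y) (T : Set ℕ) {E : Set (ℕ → S)}
    (hE : MeasurableSet E) : tmap x y T ⁻¹' E = E := by
  let m' : MeasurableSpace (ℕ → S) :=
    { MeasurableSet' := fun E => tmap x y T ⁻¹' E = E
      measurableSet_empty := by simp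
      measurableSet_compl := fun s hs => by
        show tmap x y T ⁻¹' sᶜ = sᶜ
        rw [Set.preimage_compl, hs]
      measurableSet_iUnion := fun f hf => by
        show tmap x y T ⁻¹' (⋃ i, f i) = ⋃ i, f i
        rw [Set.preimage_iUnion]
        exact Set.iUnion_congr hf }
  have hle : (MeasurableSpace.pi : MeasurableSpace (ℕ → S)) ≤ m' := by
    refine iSup_le (fun a => ?_)
    intro E hE
    obtain ⟨B, hB, rfl⟩ := hE
    show tmap x y T ⁻¹' ((fun ω : ℕ → S => ω a) ⁻¹' B) = (fun ω : ℕ → S => ω a) ⁻¹' B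
    ext ω
    simp only [Set.mem_preimage]
    show tmap x y T ω a ∈ B ↔ ω a ∈ B
    by_cases h : a ∈ T
    · have : tmap x y T ω a = swapF x y (ω a) := by simp [tmap, h]
      rw [this]; exact swapF_mem hxy hB (ω a)
    · have : tmap x y T ω a = ω a := by simp [tmap, h]
      rw [this]
  exact hle E hE

lemma tmap_measure_eq {x y : S} (hxy : Insep x y) (T : Set ℕ) (μ : Measure (ℕ → S))
    (E : Set (ℕ → S)) : μ (tmap x y T ⁻¹' E) = μ E := by
  have key : ∀ F : Set (ℕ → S), μ (tmap x y T ⁻¹' F) ≤ μ F := by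
    intro F
    calc μ (tmap x y T ⁻¹' F) ≤ μ (tmap x y T ⁻¹' (toMeasurable μ F)) :=
          measure_mono (Set.preimage_mono (subset_toMeasurable μ F))
      _ = μ (toMeasurable μ F) := by
          rw [tmap_preimage_eq hxy T (measurableSet_toMeasurable μ F)]
      _ = μ F := measure_toMeasurable F
  refine le_antisymm (key E) ?_
  have := key (tmap x y T ⁻¹' E)
  have heq : tmap x y T ⁻¹' (tmap x y T ⁻¹' E) = E := by
    ext ω
    simp only [Set.mem_preimage, tmap_invol]
  rwa [heq] at this

lemma p_into_insep_zero [Countable S] (M : MC S) {x y : S} (hne : x ≠ y)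
    (hxy : Insep x y) (z : S) : M.p z x = 0 := by
  set μ := M.P z with hμ
  have hDval : ∀ w : S, μ (toMeasurable μ (cylL [z, w])) = M.p z w := by
    intro w
    rw [measure_toMeasurable]
    have : ([z, w] : List S) = z :: [w] := rfl
    rw [this, measure_cylL M z [w]]
    simp [wt]
  have hcover : {ω : ℕ → S | ω 0 = z} ⊆ ⋃ w : {w : S // w ≠ x}, toMeasurable μ (cylL [z, w.val]) := by
    intro ω hω
    by_cases hb : ω 1 = x
    · refine Set.mem_iUnion.mpr ⟨⟨y, hne.symm⟩, ?_⟩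
      have hmem : tmap x y {1} ω ∈ cylL [z, y] := by
        intro i hi
        simp only [List.length_cons, List.length_nil] at hi
        have : i = 0 ∨ i = 1 := by omega
        rcases this with h | h <;> subst h
        · show tmap x y {1} ω 0 = z
          simpa [tmap] using hω
        · show tmap x y {1} ω 1 = y
          simp [tmap, swapF, hb]
      have h2 : tmap x y {1} ω ∈ toMeasurable μ (cylL [z, y]) :=
        subset_toMeasurable μ _ hmem
      have h3 := tmap_preimage_eq hxy {1} (measurableSet_toMeasurable μ (cylL [z, y]))
      rw [← h3]
      exact h2
    · refine Set.mem_iUnion.mpr ⟨⟨ω 1, hb⟩, subset_toMeasurable μ _ ?_⟩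
      intro i hi
      simp only [List.length_cons, List.length_nil] at hi
      have : i = 0 ∨ i = 1 := by omega
      rcases this with h | h <;> subst h
      · exact hω
      · rfl
  have h1 : (1 : ℝ≥0∞) ≤ ∑' w : {w : S // w ≠ x}, M.p z w.val := by
    calc (1:ℝ≥0∞) = μ {ω : ℕ → S | ω 0 = z} := (M.start z).symm
      _ ≤ μ (⋃ w : {w : S // w ≠ x}, toMeasurable μ (cylL [z, w.val])) := measure_mono hcover
      _ ≤ ∑' w : {w : S // w ≠ x}, μ (toMeasurable μ (cylL [z, w.val])) := measure_iUnion_le _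
      _ = ∑' w : {w : S // w ≠ x}, M.p z w.val := by
          exact tsum_congr (fun w => hDval w.val)
  have h2 : M.p z x + ∑' w : {w : S // w ≠ x}, M.p z w.val = 1 := by
    classical
    have hs : ∑' w : S, M.p z w = M.p z x + ∑' w : S, if w = x then 0 else M.p z w :=
      ENNReal.tsum_eq_add_tsum_ite x
    have hsub : ∑' w : {w : S // w ≠ x}, M.p z w.val
        = ∑' w : S, if w = x then 0 else M.p z w := by
      have hts := tsum_subtype {w : S | w ≠ x} (M.p z)
      refine Eq.trans hts ?_
      refine tsum_congr (fun w => ?_)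
      by_cases h : w = x
      · subst h; simp [Set.indicator]
      · simp [Set.indicator, h]
    rw [hsub, ← hs, M.rowSum z]
  have hle : M.p z x + 1 ≤ 0 + 1 := by
    rw [zero_add]
    calc M.p z x + 1 ≤ M.p z x + ∑' w : {w : S // w ≠ x}, M.p z w.val := by
          exact add_le_add_right h1 _
      _ = 1 := h2
  have := (ENNReal.add_le_add_iff_right ENNReal.one_ne_top).mp hle
  exact le_zero_iff.mp this


lemma wt_append_zero (M : MC S) {x : S} (hpx : ∀ z, M.p z x = 0) :
    ∀ (l : List S) (a : S), wt M a (l ++ [x]) = 0 := by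
  intro l
  induction l with
  | nil => intro a; simp [wt, hpx a]
  | cons b t ih => intro a; simp [wt, ih b]

lemma swapF_eq_iff {x w : S} (hxw : x ≠ w) (s : S) : swapF x w s = w ↔ s = x := by
  classical
  unfold swapF
  by_cases h1 : s = x
  · simp [h1]
  · by_cases h2 : s = w
    · subst h2
      rw [if_neg h1, if_pos rfl]
      exact eq_comm
    · simp [h1, h2]

lemma tmap_zero_preimage_cylL (x w : S) (hxw : x ≠ w) (l : List S) :
    tmap x w {0} ⁻¹' cylL (w :: l) = cylL (x :: l) := by
  classical
  ext ω
  simp only [Set.mem_preimage, cylL, Set.mem_setOf_eq]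
  have htm0 : tmap x w {0} ω 0 = swapF x w (ω 0) := by simp [tmap]
  have htms : ∀ j : ℕ, tmap x w {0} ω (j + 1) = ω (j + 1) := by
    intro j; simp [tmap]
  constructor
  · intro h i hi
    match i with
    | 0 =>
        have h0 := h 0 hi
        rw [htm0] at h0
        have : swapF x w (ω 0) = w := h0
        have := (swapF_eq_iff hxw (ω 0)).mp this
        simpa using this
    | (j + 1) =>
        have hj := h (j + 1) hi
        rw [htms j] at hj
        simpa using hj
  · intro h i hi
    match i with
    | 0 =>
        rw [htm0]
        have h0 := h 0 hi
        have : ω 0 = x := by simpa using h0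
        show swapF x w (ω 0) = w
        rw [(swapF_eq_iff hxw (ω 0)).mpr this]
    | (j + 1) =>
        rw [htms j]
        have hj := h (j + 1) hi
        simpa using hj

lemma measure_first_coord_zero (M : MC S) (x : S) {B : Set S} (hB : MeasurableSet B)
    (hx : x ∉ B) : M.P x {ω : ℕ → S | ω 0 ∈ B} = 0 := by
  have := M.prob x
  have hmeas : MeasurableSet {ω : ℕ → S | ω 0 ∈ B} :=
    measurable_pi_apply (X := fun _ : ℕ => S) 0 hB
  have h1 : (1:ℝ≥0∞) ≤ M.P x {ω : ℕ → S | ω 0 ∈ B}ᶜ := by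
    rw [← M.start x]
    refine measure_mono ?_
    intro ω hω
    simp only [Set.mem_setOf_eq] at hω
    simp only [Set.mem_compl_iff, Set.mem_setOf_eq, hω]
    exact hx
  have h2 : M.P x {ω : ℕ → S | ω 0 ∈ B} + M.P x {ω : ℕ → S | ω 0 ∈ B}ᶜ = 1 := by
    rw [measure_add_measure_compl hmeas]
    exact measure_univ
  have hle : M.P x {ω : ℕ → S | ω 0 ∈ B} + 1 ≤ 0 + 1 := by
    rw [zero_add]
    calc M.P x {ω : ℕ → S | ω 0 ∈ B} + 1
        ≤ M.P x {ω : ℕ → S | ω 0 ∈ B} + M.P x {ω : ℕ → S | ω 0 ∈ B}ᶜ := add_le_add_right h1 _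
      _ = 1 := h2
  exact le_zero_iff.mp ((ENNReal.add_le_add_iff_right ENNReal.one_ne_top).mp hle)

lemma mem_cylL_ofFn_append {ω : ℕ → S} {k : ℕ} {b : S} (hb : ω k = b) :
    ω ∈ cylL (List.ofFn (fun i : Fin k => ω i) ++ [b]) := by
  intro i hi
  have hlen : (List.ofFn (fun i : Fin k => ω i) ++ [b]).length = k + 1 := by simp
  rw [hlen] at hi
  rw [List.get_eq_getElem]
  by_cases hik : i < k
  · rw [List.getElem_append_left (by simpa using hik)]
    simp
  · have : i = k := by omega
    subst this
    rw [List.getElem_append_right (by simp)]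
    simpa using hb

lemma insep_false [Countable S] (M : MC S) (hrec : MCRecurrent M) {x y : S} (hne : x ≠ y)
    (hxy : Insep x y) : False := by
  classical
  have hpx : ∀ z, M.p z x = 0 := p_into_insep_zero M hne hxy
  set μ := M.P x with hμ
  have hcov : {ω : ℕ → S | tauP {x} ω ≠ ⊤}
      ⊆ ⋃ t : {t : List S // t ≠ []}, toMeasurable μ (cylL (t.val ++ [x])) := by
    intro ω hω
    obtain ⟨k, hk, hkx⟩ := tauP_ne_top_iff.mp hω
    have hkx' : ω k = x := hkx
    refine Set.mem_iUnion.mpr ⟨⟨List.ofFn (fun i : Fin k => ω i), ?_⟩,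
      subset_toMeasurable μ _ (mem_cylL_ofFn_append hkx')⟩
    intro hnil
    have : k = 0 := by
      have := congrArg List.length hnil
      simpa using this
    omega
  have hzero : ∀ t : {t : List S // t ≠ []}, μ (toMeasurable μ (cylL (t.val ++ [x]))) = 0 := by
    rintro ⟨t, ht⟩
    rw [measure_toMeasurable]
    obtain ⟨w, t', rfl⟩ := List.exists_cons_of_ne_nil ht
    have hsplit : (w :: t') ++ [x] = w :: (t' ++ [x]) := rfl
    rw [hsplit]
    by_cases hw : Insep x w
    · by_cases hwx : w = x
      · rw [hwx, hμ, measure_cylL M x (t' ++ [x])]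
        exact wt_append_zero M hpx t' x
      · have hpre := tmap_zero_preimage_cylL x w (Ne.symm hwx) (t' ++ [x])
        have hinv := tmap_measure_eq hw ({0} : Set ℕ) μ (cylL (w :: (t' ++ [x])))
        rw [hpre] at hinv
        rw [← hinv, hμ, measure_cylL M x (t' ++ [x])]
        exact wt_append_zero M hpx t' x
    · simp only [Insep, not_forall] at hw
      obtain ⟨B, hB, hBne⟩ := hw
      have hsep : ∃ B' : Set S, MeasurableSet B' ∧ w ∈ B' ∧ x ∉ B' := by
        by_cases hxB : x ∈ B
        · refine ⟨Bᶜ, hB.compl, ?_, by simpa using hxB⟩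
          simp only [Set.mem_compl_iff]
          intro hwB
          exact hBne (iff_of_true hxB hwB)
        · by_cases hwB : w ∈ B
          · exact ⟨B, hB, hwB, hxB⟩
          · exact absurd (iff_of_false hxB hwB) hBne
      obtain ⟨B', hB', hwB', hxB'⟩ := hsep
      have hsub : cylL (w :: (t' ++ [x])) ⊆ {ω : ℕ → S | ω 0 ∈ B'} := by
        intro ω hω
        have h0 : ω 0 = w := by
          have := hω 0 (by simp)
          simpa using this
        simp only [Set.mem_setOf_eq, h0]
        exact hwB'
      exact measure_mono_null hsub (measure_first_coord_zero M x hB' hxB')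
  have hfin : (1:ℝ≥0∞) ≤ 0 := by
    calc (1:ℝ≥0∞) = μ {ω : ℕ → S | tauP {x} ω ≠ ⊤} := (hrec x).symm
      _ ≤ μ (⋃ t : {t : List S // t ≠ []}, toMeasurable μ (cylL (t.val ++ [x]))) :=
          measure_mono hcov
      _ ≤ ∑' t : {t : List S // t ≠ []}, μ (toMeasurable μ (cylL (t.val ++ [x]))) :=
          measure_iUnion_le _
      _ = 0 := by
          rw [tsum_congr hzero]
          simp
  simp at hfin

lemma discrete_of_recurrent [Countable S] (M : MC S) (hrec : MCRecurrent M) :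
    ∀ s : Set S, MeasurableSet s := by
  classical
  have hsep : ∀ a b : S, a ≠ b → ∃ B : Set S, MeasurableSet B ∧ a ∈ B ∧ b ∉ B := by
    intro a b hab
    have hni : ¬ Insep a b := fun h => insep_false M hrec hab h
    simp only [Insep, not_forall] at hni
    obtain ⟨B, hB, hBne⟩ := hni
    by_cases haB : a ∈ B
    · by_cases hbB : b ∈ B
      · exact absurd (iff_of_true haB hbB) hBne
      · exact ⟨B, hB, haB, hbB⟩
    · by_cases hbB : b ∈ B
      · exact ⟨Bᶜ, hB.compl, haB, by simpa using hbB⟩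
      · exact absurd (iff_of_false haB hbB) hBne
  have hsing : ∀ a : S, MeasurableSet ({a} : Set S) := by
    intro a
    choose f hf1 hf2 hf3 using fun (b : {b : S // b ≠ a}) => hsep a b.val (Ne.symm b.2)
    have : ({a} : Set S) = ⋂ b : {b : S // b ≠ a}, f b := by
      ext u
      simp only [Set.mem_singleton_iff, Set.mem_iInter]
      constructor
      · rintro rfl b; exact hf2 b
      · intro h
        by_contra hu
        exact hf3 ⟨u, hu⟩ (h ⟨u, hu⟩)
    rw [this]
    exact MeasurableSet.iInter (fun b => hf1 b)
  intro s
  have : s = ⋃ b ∈ s, ({b} : Set S) := by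
    simp
  rw [this]
  exact MeasurableSet.biUnion s.to_countable (fun b _ => hsing b)


/-! ### events as unions of cylinders -/

def EvE (w : S) (I F : S → Prop) : Set (ℕ → S) :=
  {ω | ω 0 = w ∧ ∃ k : ℕ, 0 < k ∧ F (ω k) ∧ ∀ j, 0 < j → j < k → I (ω j)}

def pList (I : S → Prop) (l : List S) : Prop := ∀ s ∈ l, I s

lemma mem_cylL_path {ω : ℕ → S} {w b : S} {l : List S} :
    ω ∈ cylL (w :: (l ++ [b])) ↔
      ω 0 = w ∧ (∀ j, ∀ hj : j < l.length, ω (j + 1) = l.get ⟨j, hj⟩)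
        ∧ ω (l.length + 1) = b := by
  have hlen : (w :: (l ++ [b])).length = l.length + 2 := by simp
  constructor
  · intro h
    refine ⟨?_, ?_, ?_⟩
    · have := h 0 (by simp)
      simpa using this
    · intro j hj
      have hj2 : j + 1 < (w :: (l ++ [b])).length := by rw [hlen]; omega
      have := h (j + 1) hj2
      rw [this, List.get_eq_getElem]
      show (w :: (l ++ [b]))[j+1] = _
      rw [List.getElem_cons_succ, List.getElem_append_left hj]
      simp
    · have hj2 : l.length + 1 < (w :: (l ++ [b])).length := by rw [hlen]; omega
      have := h (l.length + 1) hj2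
      rw [this, List.get_eq_getElem]
      show (w :: (l ++ [b]))[l.length + 1] = _
      rw [List.getElem_cons_succ, List.getElem_append_right (by simp)]
      simp
  · rintro ⟨h0, hmid, hlast⟩ i hi
    rw [hlen] at hi
    rw [List.get_eq_getElem]
    match i with
    | 0 => simpa using h0
    | (j + 1) =>
        by_cases hjl : j < l.length
        · rw [List.getElem_cons_succ, List.getElem_append_left hjl]
          have := hmid j hjl
          rw [this, List.get_eq_getElem]
        · have : j = l.length := by omega
          subst this
          rw [List.getElem_cons_succ, List.getElem_append_right (by simp)]
          simpa using hlast

lemma EvE_eq_iUnion (w : S) (I F : S → Prop) :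
    EvE w I F = ⋃ q : {l : List S // pList I l} × {b : S // F b},
      cylL (w :: (q.1.val ++ [q.2.val])) := by
  ext ω
  constructor
  · rintro ⟨h0, k, hk, hF, hint⟩
    obtain ⟨k', rfl⟩ : ∃ k', k = k' + 1 := ⟨k - 1, by omega⟩
    refine Set.mem_iUnion.mpr ⟨⟨⟨List.ofFn (fun j : Fin k' => ω (j + 1)), ?_⟩, ⟨ω (k' + 1), hF⟩⟩, ?_⟩
    · intro s hs
      rw [List.mem_ofFn] at hs
      obtain ⟨j, rfl⟩ := hs
      exact hint (j + 1) (by omega) (by omega)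
    · rw [mem_cylL_path]
      refine ⟨h0, ?_, ?_⟩
      · intro j hj
        rw [List.length_ofFn] at hj
        rw [List.get_eq_getElem]
        simp
      · rw [List.length_ofFn]
  · intro h
    obtain ⟨⟨⟨l, hl⟩, ⟨b, hb⟩⟩, hmem⟩ := Set.mem_iUnion.mp h
    rw [mem_cylL_path] at hmem
    obtain ⟨h0, hmid, hlast⟩ := hmem
    refine ⟨h0, l.length + 1, by omega, by rw [hlast]; exact hb, ?_⟩
    intro j hj hjk
    have hj' : j - 1 < l.length := by omega
    have := hmid (j - 1) hj'
    have hjj : j - 1 + 1 = j := by omega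
    rw [hjj] at this
    rw [this]
    exact hl _ (List.get_mem l _)

lemma cylL_path_disjoint {w : S} {I F : S → Prop} (hIF : ∀ s, I s → ¬ F s) :
    Pairwise (Function.onFun Disjoint
      (fun q : {l : List S // pList I l} × {b : S // F b} =>
        cylL (w :: (q.1.val ++ [q.2.val])))) := by
  rintro ⟨⟨l, hl⟩, ⟨b, hb⟩⟩ ⟨⟨l', hl'⟩, ⟨b', hb'⟩⟩ hne
  rw [Function.onFun]
  show Disjoint (cylL (w :: (l ++ [b]))) (cylL (w :: (l' ++ [b'])))
  rw [Set.disjoint_left]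
  intro ω h1 h2
  rw [mem_cylL_path] at h1 h2
  obtain ⟨h01, hmid1, hlast1⟩ := h1
  obtain ⟨h02, hmid2, hlast2⟩ := h2
  have hlen : l.length = l'.length := by
    by_contra hll
    rcases Nat.lt_or_ge l.length l'.length with hlt | hge
    · have hF : F (ω (l.length + 1)) := by rw [hlast1]; exact hb
      have hI : I (ω (l.length + 1)) := by
        have := hmid2 l.length hlt
        rw [this]
        exact hl' _ (List.get_mem l' _)
      exact hIF _ hI hF
    · have hlt : l'.length < l.length := by omega
      have hF : F (ω (l'.length + 1)) := by rw [hlast2]; exact hb'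
      have hI : I (ω (l'.length + 1)) := by
        have := hmid1 l'.length hlt
        rw [this]
        exact hl _ (List.get_mem l _)
      exact hIF _ hI hF
  have hleq : l = l' := by
    refine List.ext_get hlen (fun j hj hj' => ?_)
    rw [← hmid1 j hj, ← hmid2 j hj']
  have hbeq : b = b' := by
    rw [← hlast1, hleq, hlast2]
  apply hne
  simp only [Prod.mk.injEq, Subtype.mk.injEq]
  exact ⟨hleq, hbeq⟩

lemma measure_EvE (M : MC S) [Countable S] (hm : ∀ s : Set S, MeasurableSet s)
    (w : S) (I F : S → Prop) (hIF : ∀ s, I s → ¬ F s) :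
    M.P w (EvE w I F)
      = ∑' q : {l : List S // pList I l} × {b : S // F b}, wt M w (q.1.val ++ [q.2.val]) := by
  rw [EvE_eq_iUnion]
  rw [measure_iUnion (cylL_path_disjoint hIF) (fun q => measurable_cylL hm _)]
  exact tsum_congr (fun q => measure_cylL M w _)

lemma measure_inter_start (M : MC S) (hm : ∀ s : Set S, MeasurableSet s) (w : S)
    (E : Set (ℕ → S)) : M.P w E = M.P w (E ∩ {ω : ℕ → S | ω 0 = w}) := by
  have := M.prob w
  have hC : MeasurableSet {ω : ℕ → S | ω 0 = w} :=
    measurable_pi_apply (X := fun _ : ℕ => S) 0 (hm {w})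
  have h1 : M.P w (E ∩ {ω : ℕ → S | ω 0 = w}) + M.P w (E \ {ω : ℕ → S | ω 0 = w}) = M.P w E :=
    measure_inter_add_diff E hC
  have hc0 : M.P w ({ω : ℕ → S | ω 0 = w}ᶜ) = 0 := by
    rw [prob_compl_eq_one_sub hC, M.start w, tsub_self]
  have h2 : M.P w (E \ {ω : ℕ → S | ω 0 = w}) = 0 :=
    measure_mono_null (fun ω hω => hω.2) hc0
  rw [← h1, h2, add_zero]


/-! ### event identifications -/

lemma event_hitAtP {A : Set S} {y : S} (hy : y ∈ A) (w : S) :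
    hitAtP A y ∩ {ω : ℕ → S | ω 0 = w} = EvE w (fun s => s ∉ A) (fun s => s = y) := by
  ext ω
  constructor
  · rintro ⟨⟨k, hτ, hky⟩, h0⟩
    obtain ⟨hk, hkA, hint⟩ := tauP_spec hτ
    exact ⟨h0, k, hk, hky, fun j hj hjk => hint j hj hjk⟩
  · rintro ⟨h0, k, hk, hF, hint⟩
    have hτ : tauP A ω = (k : ℕ∞) :=
      tauP_eq_coe hk (by rw [hF]; exact hy) hint
    exact ⟨⟨k, hτ, hF⟩, h0⟩

lemma event_fwd {A : Set S} {z : S} (hz : z ∉ A) (w : S) :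
    {ω : ℕ → S | tauP {z} ω < tauP A ω} ∩ {ω : ℕ → S | ω 0 = w}
      = EvE w (fun s => s ∉ A ∧ s ≠ z) (fun s => s = z) := by
  ext ω
  constructor
  · rintro ⟨hlt, h0⟩
    have hne : tauP {z} ω ≠ ⊤ := hlt.ne_top
    obtain ⟨k, hk⟩ := WithTop.ne_top_iff_exists.mp hne
    obtain ⟨hkpos, hkz, hint⟩ := tauP_spec hk.symm
    have hkA : (k : ℕ∞) < tauP A ω := lt_of_le_of_lt (le_of_eq hk) hlt
    have hnA := lt_tauP_iff.mp hkA
    refine ⟨h0, k, hkpos, hkz, fun j hj hjk => ⟨hnA j hj (le_of_lt hjk), ?_⟩⟩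
    have := hint j hj hjk
    simpa using this
  · rintro ⟨h0, k, hk, hF, hint⟩
    have hτz : tauP {z} ω = (k : ℕ∞) :=
      tauP_eq_coe hk hF (fun j hj hjk => by
        have := (hint j hj hjk).2
        simpa using this)
    have hτA : (k : ℕ∞) < tauP A ω := by
      refine lt_tauP_iff.mpr (fun j hj hjk => ?_)
      rcases Nat.lt_or_ge j k with h | h
      · exact (hint j hj h).1
      · have : j = k := by omega
        subst this
        rw [hF]; exact hz
    refine ⟨?_, h0⟩
    show tauP {z} ω < tauP A ω
    rw [hτz]; exact hτA

lemma event_bwd {A : Set S} {z : S} (hz : z ∉ A) (w : S) :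
    {ω : ℕ → S | tauP A ω < tauP {z} ω} ∩ {ω : ℕ → S | ω 0 = w}
      = EvE w (fun s => s ∉ A ∧ s ≠ z) (fun s => s ∈ A) := by
  ext ω
  constructor
  · rintro ⟨hlt, h0⟩
    have hne : tauP A ω ≠ ⊤ := hlt.ne_top
    obtain ⟨k, hk⟩ := WithTop.ne_top_iff_exists.mp hne
    obtain ⟨hkpos, hkA, hint⟩ := tauP_spec hk.symm
    have hkz : (k : ℕ∞) < tauP {z} ω := lt_of_le_of_lt (le_of_eq hk) hlt
    have hnz := lt_tauP_iff.mp hkz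
    refine ⟨h0, k, hkpos, hkA, fun j hj hjk => ⟨hint j hj hjk, ?_⟩⟩
    have := hnz j hj (le_of_lt hjk)
    simpa using this
  · rintro ⟨h0, k, hk, hF, hint⟩
    have hτA : tauP A ω = (k : ℕ∞) :=
      tauP_eq_coe hk hF (fun j hj hjk => (hint j hj hjk).1)
    have hτz : (k : ℕ∞) < tauP {z} ω := by
      refine lt_tauP_iff.mpr (fun j hj hjk => ?_)
      rcases Nat.lt_or_ge j k with h | h
      · have := (hint j hj h).2
        simpa using this
      · have : j = k := by omega
        subst this
        simp only [Set.mem_singleton_iff]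
        intro hzz
        rw [hzz] at hF
        exact hz hF
    refine ⟨?_, h0⟩
    show tauP A ω < tauP {z} ω
    rw [hτA]; exact hτz

lemma measure_tauP_top (M : MC S) (hm : ∀ s : Set S, MeasurableSet s)
    (hrec : MCRecurrent M) (z : S) : M.P z {ω : ℕ → S | tauP {z} ω = ⊤} = 0 := by
  have := M.prob z
  have hset : {ω : ℕ → S | tauP {z} ω ≠ ⊤} = ⋃ k : ℕ, {ω : ℕ → S | ω (k + 1) = z} := by
    ext ω
    rw [Set.mem_setOf_eq, tauP_ne_top_iff]
    constructor
    · rintro ⟨k, hk, hkz⟩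
      obtain ⟨k', rfl⟩ : ∃ k', k = k' + 1 := ⟨k - 1, by omega⟩
      exact Set.mem_iUnion.mpr ⟨k', by simpa using hkz⟩
    · intro h
      obtain ⟨k, hk⟩ := Set.mem_iUnion.mp h
      exact ⟨k + 1, by omega, by simpa using hk⟩
  have hmeas : MeasurableSet {ω : ℕ → S | tauP {z} ω ≠ ⊤} := by
    rw [hset]
    exact MeasurableSet.iUnion
      (fun k => measurable_pi_apply (X := fun _ : ℕ => S) (k + 1) (hm {z}))
  have hone : M.P z {ω : ℕ → S | tauP {z} ω ≠ ⊤} = 1 := hrec z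
  have : {ω : ℕ → S | tauP {z} ω = ⊤} = {ω : ℕ → S | tauP {z} ω ≠ ⊤}ᶜ := by
    ext ω; simp
  rw [this, prob_compl_eq_one_sub hmeas, hone, tsub_self]

lemma trichotomy (M : MC S) [Countable S] (hm : ∀ s : Set S, MeasurableSet s)
    (hrec : MCRecurrent M) {A : Set S} {z : S} (hz : z ∉ A) :
    M.P z {ω : ℕ → S | tauP {z} ω < tauP A ω}
      + M.P z {ω : ℕ → S | tauP A ω < tauP {z} ω} = 1 := by
  classical
  have := M.prob z
  set μ := M.P z with hμ
  set C : Set (ℕ → S) := {ω : ℕ → S | ω 0 = z} with hC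
  set E1 : Set (ℕ → S) := {ω : ℕ → S | tauP {z} ω < tauP A ω} with hE1
  set E2 : Set (ℕ → S) := {ω : ℕ → S | tauP A ω < tauP {z} ω} with hE2
  have hU1 : μ E1 = μ (E1 ∩ C) := measure_inter_start M hm z E1
  have hU2 : μ E2 = μ (E2 ∩ C) := measure_inter_start M hm z E2
  have hm1 : MeasurableSet (E1 ∩ C) := by
    rw [hE1, hC, event_fwd hz z, EvE_eq_iUnion]
    exact MeasurableSet.iUnion (fun q => measurable_cylL hm _)
  have hm2 : MeasurableSet (E2 ∩ C) := by
    rw [hE2, hC, event_bwd hz z, EvE_eq_iUnion]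
    exact MeasurableSet.iUnion (fun q => measurable_cylL hm _)
  have hdisj : Disjoint (E1 ∩ C) (E2 ∩ C) := by
    rw [Set.disjoint_left]
    rintro ω ⟨h1, _⟩ ⟨h2, _⟩
    have h1' : tauP {z} ω < tauP A ω := h1
    have h2' : tauP A ω < tauP {z} ω := h2
    exact absurd h2' (not_lt.mpr (le_of_lt h1'))
  have hCc : μ Cᶜ = 0 := by
    have hCm : MeasurableSet C := measurable_pi_apply (X := fun _ : ℕ => S) 0 (hm {z})
    rw [prob_compl_eq_one_sub hCm, hμ, M.start z, tsub_self]
  have htop : μ {ω : ℕ → S | tauP {z} ω = ⊤} = 0 := measure_tauP_top M hm hrec z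
  have hcover : (Set.univ : Set (ℕ → S)) ⊆ (E1 ∩ C) ∪ (E2 ∩ C) ∪ ({ω : ℕ → S | tauP {z} ω = ⊤} ∪ Cᶜ) := by
    intro ω _
    by_cases hωC : ω ∈ C
    · rcases lt_trichotomy (tauP {z} ω) (tauP A ω) with h | h | h
      · exact Or.inl (Or.inl ⟨h, hωC⟩)
      · refine Or.inr (Or.inl ?_)
        show tauP {z} ω = ⊤
        by_contra hne
        obtain ⟨k, hk⟩ := WithTop.ne_top_iff_exists.mp hne
        obtain ⟨hkpos, hkz, _⟩ := tauP_spec hk.symm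
        have hτA : tauP A ω = (k : ℕ∞) := by rw [← h, ← hk]; rfl
        obtain ⟨_, hkA, _⟩ := tauP_spec hτA
        rw [Set.mem_singleton_iff] at hkz
        rw [hkz] at hkA
        exact hz hkA
      · exact Or.inl (Or.inr ⟨h, hωC⟩)
    · exact Or.inr (Or.inr hωC)
  have hub : μ (E1 ∩ C) + μ (E2 ∩ C) ≤ 1 := by
    rw [← measure_union hdisj hm2]
    exact measure_mono (Set.subset_univ _) |>.trans_eq measure_univ
  have hlb : (1 : ℝ≥0∞) ≤ μ (E1 ∩ C) + μ (E2 ∩ C) := by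
    calc (1:ℝ≥0∞) = μ Set.univ := measure_univ.symm
      _ ≤ μ ((E1 ∩ C) ∪ (E2 ∩ C) ∪ ({ω : ℕ → S | tauP {z} ω = ⊤} ∪ Cᶜ)) := measure_mono hcover
      _ ≤ μ ((E1 ∩ C) ∪ (E2 ∩ C)) + μ ({ω : ℕ → S | tauP {z} ω = ⊤} ∪ Cᶜ) := measure_union_le _ _
      _ ≤ (μ (E1 ∩ C) + μ (E2 ∩ C)) + (μ {ω : ℕ → S | tauP {z} ω = ⊤} + μ Cᶜ) := by
          exact add_le_add (measure_union_le _ _) (measure_union_le _ _)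
      _ = μ (E1 ∩ C) + μ (E2 ∩ C) := by rw [htop, hCc, add_zero, add_zero]
  rw [hU1, hU2]
  exact le_antisymm hub hlb


/-! ### path sums -/

open scoped Classical

lemma wt_append (M : MC S) (c : S) (r : List S) :
    ∀ (t : List S) (w : S), wt M w (t ++ c :: r) = wt M w (t ++ [c]) * wt M c r := by
  intro t
  induction t with
  | nil => intro w; simp [wt, mul_assoc]
  | cons a t ih => intro w; simp [wt, ih a, mul_assoc]

lemma wt_concat (M : MC S) (c : S) :
    ∀ (t : List S) (w : S), wt M w (t ++ [c]) = wt M w t * M.p (t.getLastD w) c := by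
  intro t
  induction t with
  | nil => intro w; simp [wt]
  | cons a t ih =>
      intro w
      show M.p w a * wt M a (t ++ [c]) = M.p w a * wt M a t * M.p ((a :: t).getLastD w) c
      rw [ih a, List.getLastD_cons, mul_assoc]

lemma pList_append_iff {Q : S → Prop} {t : List S} {c : S} :
    pList Q (t ++ [c]) ↔ pList Q t ∧ Q c := by
  unfold pList
  constructor
  · intro h
    exact ⟨fun s hs => h s (by simp [hs]), h c (by simp)⟩
  · rintro ⟨h1, h2⟩ s hs
    rcases List.mem_append.mp hs with h | h
    · exact h1 s h
    · rw [List.mem_singleton.mp h]; exact h2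

lemma pList_middle_iff {Q : S → Prop} {t r : List S} {c : S} :
    pList Q (t ++ c :: r) ↔ pList Q t ∧ Q c ∧ pList Q r := by
  unfold pList
  constructor
  · intro h
    exact ⟨fun s hs => h s (by simp [hs]), h c (by simp), fun s hs => h s (by simp [hs])⟩
  · rintro ⟨h1, h2, h3⟩ s hs
    rcases List.mem_append.mp hs with h | h
    · exact h1 s h
    · rcases List.mem_cons.mp h with h' | h'
      · rw [h']; exact h2
      · exact h3 s h'

open scoped Classical in
noncomputable def SumTo (M : MC S) (w c : S) (Q : S → Prop) : ℝ≥0∞ :=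
  ∑' l : List S, if pList Q l then wt M w (l ++ [c]) else 0

open scoped Classical in
noncomputable def SumToF (M : MC S) (w : S) (Q F : S → Prop) : ℝ≥0∞ :=
  ∑' q : List S × S, if pList Q q.1 ∧ F q.2 then wt M w (q.1 ++ [q.2]) else 0

lemma subtype_prod_sum (f : List S → S → ℝ≥0∞) (Q : S → Prop) (F : S → Prop) :
    ∑' q : {l : List S // pList Q l} × {b : S // F b}, f q.1.val q.2.val
      = ∑' q : List S × S, if pList Q q.1 ∧ F q.2 then f q.1 q.2 else 0 := by
  classical
  rw [ENNReal.tsum_prod', ENNReal.tsum_prod']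
  have h1 : ∀ l : {l : List S // pList Q l},
      ∑' b : {b : S // F b}, f l.val b.val = ∑' b : S, if F b then f l.val b else 0 := by
    intro l
    have := tsum_subtype {b : S | F b} (fun b => f l.val b)
    refine Eq.trans this ?_
    exact tsum_congr fun b => by by_cases h : F b <;> simp [Set.indicator, h]
  rw [tsum_congr h1]
  have h2 := tsum_subtype {l : List S | pList Q l}
    (fun l => ∑' b : S, if F b then f l b else 0)
  refine Eq.trans h2 ?_
  refine tsum_congr fun l => ?_
  by_cases h : pList Q l
  · simp only [Set.indicator, Set.mem_setOf_eq, if_pos h]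
    exact tsum_congr fun b => by by_cases hF : F b <;> simp [h, hF]
  · simp only [Set.indicator, Set.mem_setOf_eq, if_neg h]
    symm
    have hz : ∀ b : S, (if pList Q l ∧ F b then f l b else 0) = 0 := fun b => by simp [h]
    rw [tsum_congr hz, tsum_zero]

lemma tsum_singleton_F (M : MC S) (w c : S) (Q : S → Prop) :
    ∑' q : List S × S, (if pList Q q.1 ∧ q.2 = c then wt M w (q.1 ++ [q.2]) else 0)
      = SumTo M w c Q := by
  classical
  rw [ENNReal.tsum_prod']
  unfold SumTo
  refine tsum_congr fun l => ?_
  by_cases h : pList Q l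
  · simp only [h, true_and]
    have hcong : ∀ b : S, (if b = c then wt M w (l ++ [b]) else 0)
        = (if b = c then wt M w (l ++ [c]) else 0) := by
      intro b
      by_cases hb : b = c
      · rw [hb]
      · simp [hb]
    rw [tsum_congr hcong, tsum_ite_eq]
    simp [h]
  · simp [h]

lemma concat_injective : Function.Injective (fun q : List S × S => q.1 ++ [q.2]) := by
  rintro ⟨t, b⟩ ⟨t', b'⟩ h
  simp only at h
  have h1 : t = t' := by
    have := congrArg List.dropLast h
    simpa [List.dropLast_concat] using this
  have h2 : b = b' := by
    have := congrArg List.getLast? h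
    simpa [List.getLast?_concat] using this
  simp [h1, h2]

lemma SumTo_split_last (M : MC S) (w c : S) (Q : S → Prop) :
    SumTo M w c Q = M.p w c + ∑' b : S, (if Q b then SumTo M w b Q * M.p b c else 0) := by
  classical
  have hb : (∑' l : List S, if l = [] then 0 else if pList Q l then wt M w (l ++ [c]) else 0)
      = ∑' b : S, (if Q b then (∑' l : List S, if pList Q l then wt M w (l ++ [b]) else 0)
          * M.p b c else 0) := by
    have hinj := concat_injective (S := S)
    have hsupp : Function.support
        (fun l : List S => if l = [] then 0 else if pList Q l then wt M w (l ++ [c]) else 0)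
        ⊆ Set.range (fun q : List S × S => q.1 ++ [q.2]) := by
      intro l hl
      rcases List.eq_nil_or_concat l with rfl | ⟨t, b, rfl⟩
      · simp at hl
      · exact ⟨(t, b), by simp⟩
    have hre := Function.Injective.tsum_eq hinj
      (f := fun l : List S => if l = [] then 0 else if pList Q l then wt M w (l ++ [c]) else 0)
      hsupp
    have hre' : ∑' (q : List S × S), (if q.1 ++ [q.2] = [] then 0
          else if pList Q (q.1 ++ [q.2]) then wt M w ((q.1 ++ [q.2]) ++ [c]) else 0)
        = ∑' (l : List S), (if l = [] then 0 else if pList Q l then wt M w (l ++ [c]) else 0) := hre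
    refine Eq.trans hre'.symm ?_
    have hterm : ∀ q : List S × S,
        (if q.1 ++ [q.2] = [] then 0
          else if pList Q (q.1 ++ [q.2]) then wt M w ((q.1 ++ [q.2]) ++ [c]) else 0)
          = (if pList Q q.1 then wt M w (q.1 ++ [q.2]) else 0)
              * (if Q q.2 then M.p q.2 c else 0) := by
      rintro ⟨t, b⟩
      have hne : t ++ [b] ≠ [] := by simp
      rw [if_neg hne]
      have hwt : wt M w ((t ++ [b]) ++ [c]) = wt M w (t ++ [b]) * M.p b c := by
        have hassoc : (t ++ [b]) ++ [c] = t ++ b :: [c] := by simp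
        rw [hassoc, wt_append M b [c] t w]
        simp [wt]
      by_cases hQ : pList Q (t ++ [b])
      · have hQ' := pList_append_iff.mp hQ
        rw [if_pos hQ, if_pos hQ'.1, if_pos hQ'.2, hwt]
      · rw [if_neg hQ]
        rw [pList_append_iff] at hQ
        push_neg at hQ
        by_cases h1 : pList Q t
        · rw [if_pos h1, if_neg (hQ h1), mul_zero]
        · rw [if_neg h1, zero_mul]
    rw [tsum_congr hterm, ENNReal.tsum_prod', ENNReal.tsum_comm]
    refine tsum_congr fun b => ?_
    by_cases hbQ : Q b
    · simp only [hbQ, if_true]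
      rw [← ENNReal.tsum_mul_right]
    · simp [hbQ]
  unfold SumTo
  rw [ENNReal.tsum_eq_add_tsum_ite ([] : List S)]
  have hnil : (if pList Q ([] : List S) then wt M w ([] ++ [c]) else 0) = M.p w c := by
    have hpl : pList Q ([] : List S) := by intro s hs; simp at hs
    simp [hpl, wt]
  rw [hnil]
  congr 1
  exact Eq.trans (tsum_congr fun l => by by_cases h : l = [] <;> simp [h]) hb


lemma tsum_option (f : Option κ → ℝ≥0∞) : ∑' o : Option κ, f o = f none + ∑' k : κ, f (some k) := by
  classical
  rw [ENNReal.tsum_eq_add_tsum_ite none]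
  congr 1
  have hinj : Function.Injective (Option.some : κ → Option κ) := Option.some_injective κ
  have hsupp : Function.support (fun o : Option κ => if o = none then 0 else f o)
      ⊆ Set.range (Option.some : κ → Option κ) := by
    intro o ho
    rcases o with _ | k
    · simp at ho
    · exact ⟨k, rfl⟩
  have hre := Function.Injective.tsum_eq hinj
    (f := fun o : Option κ => if o = none then 0 else f o) hsupp
  have hre' : ∑' k : κ, (if (some k : Option κ) = none then 0 else f (some k))
      = ∑' o : Option κ, (if o = none then 0 else f o) := hre
  exact Eq.trans (tsum_congr fun o => by rcases o with _ | k <;> simp)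
    (hre'.symm.trans (tsum_congr fun k => by simp))

section Split

variable (M : MC S) (A : Set S) (z : S)

/-- splitting a path at the first visit to `z`. -/
lemma SumTo_split_first (hz : z ∉ A) (w : S) :
    SumTo M w z (fun s => s ∉ A)
      = SumTo M w z (fun s => s ∉ A ∧ s ≠ z) * (1 + SumTo M z z (fun s => s ∉ A)) := by
  classical
  set J : S → Prop := fun s => s ∉ A with hJ
  set I : S → Prop := fun s => s ∉ A ∧ s ≠ z with hI
  set p : S → Bool := fun s => decide (s ≠ z) with hp
  have hdecomp : ∀ (t rest : List S), (∀ s ∈ t, s ≠ z) →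
      List.takeWhile p (t ++ z :: rest) = t ∧ List.dropWhile p (t ++ z :: rest) = z :: rest := by
    intro t
    induction t with
    | nil =>
        intro rest _
        constructor
        · exact List.takeWhile_cons_of_neg (by simp [hp])
        · show List.dropWhile p (z :: rest) = z :: rest
          rw [List.dropWhile_cons_of_neg (by simp [hp])]
    | cons a t ih =>
        intro rest hmem
        have ha : a ≠ z := hmem a (by simp)
        have iht := ih rest (fun s hs => hmem s (by simp [hs]))
        constructor
        · show List.takeWhile p (a :: (t ++ z :: rest)) = a :: t
          rw [List.takeWhile_cons_of_pos (by simp [hp, ha]), iht.1]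
        · show List.dropWhile p (a :: (t ++ z :: rest)) = z :: rest
          rw [List.dropWhile_cons_of_pos (by simp [hp, ha]), iht.2]
  set F : List S → ℝ≥0∞ := fun l => if pList J l then wt M w (l ++ [z]) else 0 with hF
  set G : List S × Option (List S) → ℝ≥0∞ := fun q =>
    (if pList I q.1 then wt M w (q.1 ++ [z]) else 0)
      * (match q.2 with
          | none => 1
          | some rest => if pList J rest then wt M z (rest ++ [z]) else 0)
    with hG
  have hkey : (∑' l : List S, F l) = ∑' q : List S × Option (List S), G q := by
    have hGI : ∀ q : List S × Option (List S), G q ≠ 0 → pList I q.1 := by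
      intro q hq
      by_contra h
      apply hq
      simp only [hG, if_neg h, zero_mul]
    set mer : List S × Option (List S) → List S := fun q =>
      match q.2 with
      | none => q.1
      | some rest => q.1 ++ z :: rest
      with hmer
    have hmerwt : ∀ (t rest : List S), wt M w ((t ++ z :: rest) ++ [z])
        = wt M w (t ++ [z]) * wt M z (rest ++ [z]) := by
      intro t rest
      have hassoc : (t ++ z :: rest) ++ [z] = t ++ z :: (rest ++ [z]) := by simp
      rw [hassoc, wt_append M z (rest ++ [z]) t w]
    refine tsum_eq_tsum_of_ne_zero_bij (fun x => mer x.val) ?_ ?_ ?_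
    · -- injective
      rintro ⟨⟨t, o⟩, hx⟩ ⟨⟨t', o'⟩, hx'⟩ h
      simp only [hmer] at h
      have hIt : pList I t := hGI _ hx
      have hIt' : pList I t' := hGI _ hx'
      have htz : ∀ s ∈ t, s ≠ z := fun s hs => (hIt s hs).2
      have htz' : ∀ s ∈ t', s ≠ z := fun s hs => (hIt' s hs).2
      rcases o with _ | rest <;> rcases o' with _ | rest'
      · simp only at h
        simp [h]
      · exfalso
        simp only at h
        have : z ∈ t := by rw [h]; simp
        exact (htz z this) rfl
      · exfalso
        simp only at h
        have : z ∈ t' := by rw [← h]; simp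
        exact (htz' z this) rfl
      · simp only at h
        have h1 : t = t' := by
          have e1 := (hdecomp t rest htz).1
          have e2 := (hdecomp t' rest' htz').1
          rw [← e1, ← e2, h]
        subst h1
        have h2 : rest = rest' := by
          simpa using List.append_cancel_left h
        simp [h2]
    · -- support F ⊆ range
      intro l hl
      have hJl : pList J l := by
        by_contra h
        apply hl
        simp only [hF, if_neg h]
      have hwl : wt M w (l ++ [z]) ≠ 0 := by
        intro h0
        apply hl
        simp only [hF, if_pos hJl, h0]
      by_cases hzl : z ∈ l
      · have hdw : List.dropWhile p l ≠ [] := by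
          intro hnil
          have := List.dropWhile_eq_nil_iff.mp hnil z hzl
          simp [hp] at this
        have hhead : (List.dropWhile p l).head hdw = z := by
          have h1 := List.head_dropWhile_not p hdw
          by_contra hne
          have h2 : p ((List.dropWhile p l).head hdw) = true := decide_eq_true hne
          rw [h1] at h2
          exact Bool.false_ne_true h2
        have hldecomp : l = List.takeWhile p l ++ z :: (List.dropWhile p l).tail := by
          conv_lhs => rw [← List.takeWhile_append_dropWhile (p := p) (l := l)]
          congr 1
          rw [← hhead]
          exact (List.cons_head_tail hdw).symm
        set t := List.takeWhile p l
        set rest := (List.dropWhile p l).tail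
        have htI : pList I t := by
          intro s hs
          refine ⟨hJl s ((List.takeWhile_sublist p).subset hs), ?_⟩
          have := List.mem_takeWhile_imp hs
          simpa [hp] using this
        have hrestJ : pList J rest := by
          intro s hs
          exact hJl s ((List.Sublist.trans (List.tail_sublist _) (List.dropWhile_sublist p)).subset hs)
        refine ⟨⟨(t, some rest), ?_⟩, ?_⟩
        · show G (t, some rest) ≠ 0
          simp only [hG, if_pos htI, if_pos hrestJ]
          intro h0
          apply hwl
          rw [hldecomp, hmerwt t rest]
          exact h0
        · show mer (t, some rest) = l
          simp only [hmer]
          exact hldecomp.symm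
      · have htI : pList I l := fun s hs => ⟨hJl s hs, fun hsz => hzl (hsz ▸ hs)⟩
        refine ⟨⟨(l, none), ?_⟩, ?_⟩
        · show G (l, none) ≠ 0
          simp only [hG, if_pos htI, mul_one]
          exact hwl
        · show mer (l, none) = l
          simp [hmer]
    · -- values agree
      rintro ⟨⟨t, o⟩, hx⟩
      have hIt : pList I t := hGI _ hx
      have hJt : pList J t := fun s hs => (hIt s hs).1
      rcases o with _ | rest
      · show F (mer (t, none)) = G (t, none)
        simp only [hmer, hF, hG, if_pos hJt, if_pos hIt, mul_one]
      · have hrestJ : pList J rest := by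
          by_contra h
          apply hx
          simp only [hG, if_neg h, mul_zero]
        show F (mer (t, some rest)) = G (t, some rest)
        have hJfull : pList J (t ++ z :: rest) := by
          rw [pList_middle_iff]
          exact ⟨hJt, hz, hrestJ⟩
        simp only [hmer, hF, hG, if_pos hJfull, if_pos hIt, if_pos hrestJ]
        exact hmerwt t rest
  have hrhs : (∑' q : List S × Option (List S), G q)
      = SumTo M w z I * (1 + SumTo M z z J) := by
    rw [ENNReal.tsum_prod']
    have hinner : ∀ t : List S, (∑' o : Option (List S), G (t, o))
        = (if pList I t then wt M w (t ++ [z]) else 0) * (1 + SumTo M z z J) := by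
      intro t
      rw [tsum_option (fun o => G (t, o))]
      have h1 : G (t, none) = (if pList I t then wt M w (t ++ [z]) else 0) * 1 := rfl
      have h2 : ∀ rest : List S, G (t, some rest)
          = (if pList I t then wt M w (t ++ [z]) else 0)
              * (if pList J rest then wt M z (rest ++ [z]) else 0) := fun rest => rfl
      rw [h1, tsum_congr h2, ENNReal.tsum_mul_left, ← mul_add]
      rfl
    rw [tsum_congr hinner, ENNReal.tsum_mul_right]
    rfl
  show (∑' l : List S, F l) = _
  rw [hkey, hrhs]

end Split

lemma tsum_len_le_one (M : MC S) [Countable S] (hm : ∀ s : Set S, MeasurableSet s)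
    (z : S) (Q : S → Prop) (n : ℕ) :
    ∑' l : List S, (if pList Q l ∧ l.length = n then wt M z (l ++ [z]) else 0) ≤ 1 := by
  classical
  have := M.prob z
  set 𝔖 : Set (List S) := {l | pList Q l ∧ l.length = n} with h𝔖
  have hsub : ∑' l : 𝔖, wt M z (l.val ++ [z])
      = ∑' l : List S, (if pList Q l ∧ l.length = n then wt M z (l ++ [z]) else 0) := by
    refine (tsum_subtype 𝔖 (fun l => wt M z (l ++ [z]))).trans ?_
    refine tsum_congr fun l => ?_
    by_cases h : pList Q l ∧ l.length = n <;> simp [Set.indicator, h𝔖, h]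
  rw [← hsub]
  have hdisj : Pairwise (Function.onFun Disjoint
      (fun l : 𝔖 => cylL (z :: (l.val ++ [z])))) := by
    rintro ⟨l, hl⟩ ⟨l', hl'⟩ hne
    rw [Function.onFun]
    show Disjoint (cylL (z :: (l ++ [z]))) (cylL (z :: (l' ++ [z])))
    rw [Set.disjoint_left]
    intro ω h1 h2
    rw [mem_cylL_path] at h1 h2
    apply hne
    refine Subtype.ext ?_
    refine List.ext_get (by rw [hl.2, hl'.2]) fun j hj hj' => ?_
    rw [← h1.2.1 j hj, ← h2.2.1 j hj']
  have hmeas : ∀ l : 𝔖, MeasurableSet (cylL (z :: (l.val ++ [z]))) :=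
    fun l => measurable_cylL hm _
  calc ∑' l : 𝔖, wt M z (l.val ++ [z])
      = ∑' l : 𝔖, M.P z (cylL (z :: (l.val ++ [z]))) :=
        tsum_congr fun l => (measure_cylL M z _).symm
    _ = M.P z (⋃ l : 𝔖, cylL (z :: (l.val ++ [z]))) := (measure_iUnion hdisj hmeas).symm
    _ ≤ 1 := prob_le_one

lemma SumTo_ne_top (M : MC S) [Countable S] (hm : ∀ s : Set S, MeasurableSet s)
    (A : Set S) (z : S) (hz : z ∉ A)
    (hr : SumTo M z z (fun s => s ∉ A ∧ s ≠ z) < 1) :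
    SumTo M z z (fun s => s ∉ A) ≠ ⊤ := by
  classical
  set J : S → Prop := fun s => s ∉ A with hJ
  set I : S → Prop := fun s => s ∉ A ∧ s ≠ z with hI
  set r : ℝ≥0∞ := SumTo M z z I with hrdef
  have hsub1 : (1 : ℝ≥0∞) - r ≠ 0 := by
    intro h0
    exact absurd (tsub_eq_zero_iff_le.mp h0) (not_le.mpr hr)
  have hc_ne : r * ((1 : ℝ≥0∞) - r)⁻¹ ≠ ⊤ :=
    ENNReal.mul_ne_top hr.ne_top (ENNReal.inv_ne_top.mpr hsub1)
  suffices hT : SumTo M z z J ≤ r * ((1 : ℝ≥0∞) - r)⁻¹ by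
    exact ne_top_of_le_ne_top hc_ne hT
  set p : S → Bool := fun s => decide (s ≠ z) with hp
  have hdecomp : ∀ (t rest : List S), (∀ s ∈ t, s ≠ z) →
      List.takeWhile p (t ++ z :: rest) = t ∧ List.dropWhile p (t ++ z :: rest) = z :: rest := by
    intro t
    induction t with
    | nil =>
        intro rest _
        constructor
        · exact List.takeWhile_cons_of_neg (by simp [hp])
        · show List.dropWhile p (z :: rest) = z :: rest
          rw [List.dropWhile_cons_of_neg (by simp [hp])]
    | cons a t ih =>
        intro rest hmem
        have ha : a ≠ z := hmem a (by simp)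
        have iht := ih rest (fun s hs => hmem s (by simp [hs]))
        constructor
        · show List.takeWhile p (a :: (t ++ z :: rest)) = a :: t
          rw [List.takeWhile_cons_of_pos (by simp [hp, ha]), iht.1]
        · show List.dropWhile p (a :: (t ++ z :: rest)) = z :: rest
          rw [List.dropWhile_cons_of_pos (by simp [hp, ha]), iht.2]
  have hldecomp : ∀ l : List S, z ∈ l →
      l = List.takeWhile p l ++ z :: (List.dropWhile p l).tail := by
    intro l hzl
    have hdw : List.dropWhile p l ≠ [] := by
      intro hnil
      have := List.dropWhile_eq_nil_iff.mp hnil z hzl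
      simp [hp] at this
    have hhead : (List.dropWhile p l).head hdw = z := by
      have h1 := List.head_dropWhile_not p hdw
      by_contra hne
      have h2 : p ((List.dropWhile p l).head hdw) = true := decide_eq_true hne
      rw [h1] at h2
      exact Bool.false_ne_true h2
    conv_lhs => rw [← List.takeWhile_append_dropWhile (p := p) (l := l)]
    congr 1
    rw [← hhead]
    exact (List.cons_head_tail hdw).symm
  have htakeI : ∀ l : List S, pList J l →
      pList I (List.takeWhile p l) := by
    intro l hJl s hs
    refine ⟨hJl s ((List.takeWhile_sublist p).subset hs), ?_⟩
    have := List.mem_takeWhile_imp hs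
    simpa [hp] using this
  have hmerwt : ∀ (t rest : List S) (w : S), wt M w ((t ++ z :: rest) ++ [z])
      = wt M w (t ++ [z]) * wt M z (rest ++ [z]) := by
    intro t rest w
    have hassoc : (t ++ z :: rest) ++ [z] = t ++ z :: (rest ++ [z]) := by simp
    rw [hassoc, wt_append M z (rest ++ [z]) t w]
  show SumTo M z z J ≤ r * ((1:ℝ≥0∞) - r)⁻¹
  unfold SumTo
  rw [ENNReal.tsum_eq_iSup_sum]
  refine iSup_le fun Fs => ?_
  set N := Fs.sup List.length with hN
  set fN : List S → ℝ≥0∞ :=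
    fun l => if pList J l ∧ l.length ≤ N then wt M z (l ++ [z]) else 0 with hfN
  set TN : ℝ≥0∞ := ∑' l : List S, fN l with hTN
  have h1 : (∑ l ∈ Fs, if pList J l then wt M z (l ++ [z]) else 0) ≤ TN := by
    rw [hTN]
    refine le_trans (le_of_eq (Finset.sum_congr rfl fun l hl => ?_)) (ENNReal.sum_le_tsum Fs)
    have hlen : l.length ≤ N := Finset.le_sup hl
    by_cases hQ : pList J l
    · simp [hfN, hQ, hlen]
    · simp [hfN, hQ]
  refine le_trans h1 ?_
  -- T_N ≤ r * (1 + T_N)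
  set gN : List S × Option (List S) → ℝ≥0∞ := fun q =>
    (if pList I q.1 then wt M z (q.1 ++ [z]) else 0)
      * (match q.2 with
          | none => 1
          | some rest => fN rest)
    with hgN
  have hgsum : (∑' q : List S × Option (List S), gN q) = r * (1 + TN) := by
    rw [ENNReal.tsum_prod']
    have hinner : ∀ t : List S, (∑' o : Option (List S), gN (t, o))
        = (if pList I t then wt M z (t ++ [z]) else 0) * (1 + TN) := by
      intro t
      rw [tsum_option (fun o => gN (t, o))]
      have hno : gN (t, none) = (if pList I t then wt M z (t ++ [z]) else 0) * 1 := rfl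
      have hso : ∀ rest : List S, gN (t, some rest)
          = (if pList I t then wt M z (t ++ [z]) else 0) * fN rest := fun rest => rfl
      rw [hno, tsum_congr hso, ENNReal.tsum_mul_left, ← mul_add, hTN]
    rw [tsum_congr hinner, ENNReal.tsum_mul_right]
    rfl
  set ψ : List S → List S × Option (List S) := fun l =>
    if z ∈ l then (List.takeWhile p l, some ((List.dropWhile p l).tail)) else (l, none)
    with hψ
  have hψinj : Function.Injective ψ := by
    intro l l' h
    by_cases h1 : z ∈ l <;> by_cases h2 : z ∈ l'
    · rw [hψ] at h
      simp only [if_pos h1, if_pos h2, Prod.mk.injEq, Option.some.injEq] at h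
      rw [hldecomp l h1, hldecomp l' h2, h.1, h.2]
    · exfalso
      rw [hψ] at h
      simp only [if_pos h1, if_neg h2, Prod.mk.injEq] at h
      exact (Option.some_ne_none _) h.2
    · exfalso
      rw [hψ] at h
      simp only [if_neg h1, if_pos h2, Prod.mk.injEq] at h
      exact (Option.some_ne_none _) h.2.symm
    · rw [hψ] at h
      simp only [if_neg h1, if_neg h2, Prod.mk.injEq] at h
      exact h.1
  have h2 : TN ≤ r * (1 + TN) := by
    rw [← hgsum, hTN]
    refine Summable.tsum_le_tsum_of_inj ψ hψinj (fun c _ => zero_le) (fun l => ?_)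
      ENNReal.summable ENNReal.summable
    by_cases hl : pList J l ∧ l.length ≤ N
    · by_cases hzl : z ∈ l
      · have hld := hldecomp l hzl
        set t := List.takeWhile p l
        set rest := (List.dropWhile p l).tail
        have hIt : pList I t := htakeI l hl.1
        have hJrest : pList J rest := by
          intro s hs
          exact hl.1 s (((List.tail_sublist _).trans (List.dropWhile_sublist p)).subset hs)
        have hlrest : rest.length ≤ N := by
          refine le_trans ?_ hl.2
          conv_rhs => rw [hld]
          simp only [List.length_append, List.length_cons]
          omega
        have hval : fN l = gN (ψ l) := by
          rw [hψ]
          simp only [if_pos hzl]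
          rw [hfN]
          simp only [if_pos hl]
          rw [hgN]
          simp only [if_pos (show pList I (List.takeWhile p l) from hIt)]
          show wt M z (l ++ [z]) = wt M z (t ++ [z]) * fN rest
          rw [hfN]
          simp only [if_pos (And.intro hJrest hlrest)]
          conv_lhs => rw [hld]
          exact hmerwt t rest z
        exact le_of_eq hval
      · have hIl : pList I l := fun s hs => ⟨hl.1 s hs, fun hsz => hzl (hsz ▸ hs)⟩
        have hval : fN l = gN (ψ l) := by
          rw [hψ]
          simp only [if_neg hzl]
          rw [hfN]
          simp only [if_pos hl]
          rw [hgN]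
          simp only [if_pos hIl]
          show wt M z (l ++ [z]) = wt M z (l ++ [z]) * 1
          rw [mul_one]
        exact le_of_eq hval
    · have : fN l = 0 := by rw [hfN]; simp [hl]
      rw [this]
      exact zero_le
  have h3 : TN ≠ ⊤ := by
    have hpoint : ∀ l : List S, fN l
        = ∑ n ∈ Finset.range (N + 1),
            (if pList J l ∧ l.length = n then wt M z (l ++ [z]) else 0) := by
      intro l
      by_cases hQ : pList J l
      · have hcong : ∀ n ∈ Finset.range (N + 1),
            (if pList J l ∧ l.length = n then wt M z (l ++ [z]) else 0)
              = (if l.length = n then wt M z (l ++ [z]) else 0) := by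
          intro n _
          by_cases h : l.length = n <;> simp [hQ, h]
        rw [Finset.sum_congr rfl hcong, Finset.sum_ite_eq (Finset.range (N + 1)) l.length
          (fun _ => wt M z (l ++ [z]))]
        rw [hfN]
        simp only [hQ, true_and]
        by_cases h : l.length ≤ N
        · simp [h, Nat.lt_succ_of_le h]
        · have hnlt : ¬ l.length < N + 1 := fun hlt => h (Nat.lt_succ_iff.mp hlt)
          simp [h, hnlt]
      · rw [hfN]
        simp [hQ]
    rw [hTN, tsum_congr hpoint, Summable.tsum_finsetSum (fun n _ => ENNReal.summable)]
    refine ne_top_of_le_ne_top (?_ : ((N : ℝ≥0∞) + 1) ≠ ⊤) ?_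
    · exact ENNReal.add_ne_top.mpr ⟨ENNReal.natCast_ne_top N, ENNReal.one_ne_top⟩
    · calc ∑ n ∈ Finset.range (N + 1),
            ∑' l : List S, (if pList J l ∧ l.length = n then wt M z (l ++ [z]) else 0)
          ≤ ∑ _n ∈ Finset.range (N + 1), (1 : ℝ≥0∞) :=
            Finset.sum_le_sum (fun n _ => tsum_len_le_one M hm z J n)
        _ = ((N : ℝ≥0∞) + 1) := by simp
  -- finish: TN ≤ r * (1-r)⁻¹
  have h4 : ((1:ℝ≥0∞) - r) * TN ≤ r := by
    have hexp : r * (1 + TN) = r + r * TN := by rw [mul_add, mul_one]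
    have h5 : TN - r * TN ≤ r := by
      rw [tsub_le_iff_right]
      rw [hexp] at h2
      exact h2
    have h6 : ((1:ℝ≥0∞) - r) * TN = 1 * TN - r * TN := by
      refine ENNReal.sub_mul (fun _ _ => h3)
    rw [h6, one_mul]
    exact h5
  calc TN = 1 * TN := (one_mul TN).symm
    _ = (((1:ℝ≥0∞) - r)⁻¹ * ((1:ℝ≥0∞) - r)) * TN := by
        rw [ENNReal.inv_mul_cancel hsub1 (by
          exact ne_top_of_le_ne_top ENNReal.one_ne_top tsub_le_self)]
    _ = ((1:ℝ≥0∞) - r)⁻¹ * (((1:ℝ≥0∞) - r) * TN) := by rw [mul_assoc]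
    _ ≤ ((1:ℝ≥0∞) - r)⁻¹ * r := mul_le_mul_right h4 _
    _ = r * ((1:ℝ≥0∞) - r)⁻¹ := mul_comm _ _


/-! ### measure identities -/

lemma measure_fwd_eq (M : MC S) [Countable S] (hm : ∀ s : Set S, MeasurableSet s)
    {A : Set S} {z : S} (hz : z ∉ A) (w : S) :
    M.P w {ω : ℕ → S | tauP {z} ω < tauP A ω} = SumTo M w z (fun s => s ∉ A ∧ s ≠ z) := by
  rw [measure_inter_start M hm w _, event_fwd hz w,
    measure_EvE M hm w _ _ (fun s hs hsz => hs.2 hsz)]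
  rw [subtype_prod_sum (fun l b => wt M w (l ++ [b])) _ _]
  exact tsum_singleton_F M w z _

lemma measure_bwd_eq (M : MC S) [Countable S] (hm : ∀ s : Set S, MeasurableSet s)
    {A : Set S} {z : S} (hz : z ∉ A) :
    M.P z {ω : ℕ → S | tauP A ω < tauP {z} ω}
      = SumToF M z (fun s => s ∉ A ∧ s ≠ z) (fun s => s ∈ A) := by
  rw [measure_inter_start M hm z _, event_bwd hz z,
    measure_EvE M hm z _ _ (fun s hs => hs.1)]
  rw [subtype_prod_sum (fun l b => wt M z (l ++ [b])) _ _]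
  rfl

lemma measure_hit_eq (M : MC S) [Countable S] (hm : ∀ s : Set S, MeasurableSet s)
    {A : Set S} {y : S} (hy : y ∈ A) (x : S) :
    M.P x (hitAtP A y) = SumTo M x y (fun s => s ∉ A) := by
  rw [measure_inter_start M hm x _, event_hitAtP hy x,
    measure_EvE M hm x _ _ (fun s hs hsy => hs (hsy ▸ hy))]
  rw [subtype_prod_sum (fun l b => wt M x (l ++ [b])) _ _]
  exact tsum_singleton_F M x y _

lemma G_eq_div (M : MC S) [Countable S] (hm : ∀ s : Set S, MeasurableSet s)
    (hrec : MCRecurrent M) {A : Set S} {z : S} (hz : z ∉ A) (x : S) :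
    SumTo M x z (fun s => s ∉ A)
      = M.P x {ω : ℕ → S | tauP {z} ω < tauP A ω}
          / M.P z {ω : ℕ → S | tauP A ω < tauP {z} ω} := by
  classical
  set u : ℝ≥0∞ := M.P x {ω : ℕ → S | tauP {z} ω < tauP A ω} with hu
  set v : ℝ≥0∞ := M.P z {ω : ℕ → S | tauP A ω < tauP {z} ω} with hv
  set rr : ℝ≥0∞ := M.P z {ω : ℕ → S | tauP {z} ω < tauP A ω} with hrr
  set T : ℝ≥0∞ := SumTo M z z (fun s => s ∉ A) with hT
  have htri : rr + v = 1 := trichotomy M hm hrec hz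
  have hueq : u = SumTo M x z (fun s => s ∉ A ∧ s ≠ z) := measure_fwd_eq M hm hz x
  have hreq : rr = SumTo M z z (fun s => s ∉ A ∧ s ≠ z) := measure_fwd_eq M hm hz z
  have hG : SumTo M x z (fun s => s ∉ A)
      = SumTo M x z (fun s => s ∉ A ∧ s ≠ z) * (1 + T) := SumTo_split_first M A z hz x
  have hTrec : T = SumTo M z z (fun s => s ∉ A ∧ s ≠ z) * (1 + T) := SumTo_split_first M A z hz z
  have hrle : rr ≤ 1 := by
    rw [← htri]; exact le_add_right le_rfl
  rcases lt_or_eq_of_le hrle with hlt | heq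
  · -- rr < 1
    have hrne : rr ≠ ⊤ := hlt.ne_top
    have hveq : v = 1 - rr := by
      have h1 : rr + v - rr = 1 - rr := by rw [htri]
      rwa [ENNReal.add_sub_cancel_left hrne] at h1
    have hvne0 : v ≠ 0 := by
      rw [hveq]
      intro h0
      exact absurd (tsub_eq_zero_iff_le.mp h0) (not_le.mpr hlt)
    have hvnetop : v ≠ ⊤ := by
      rw [hveq]
      exact ne_top_of_le_ne_top ENNReal.one_ne_top tsub_le_self
    have hTne : T ≠ ⊤ := by
      rw [hT]
      exact SumTo_ne_top M hm A z hz (by rw [← hreq]; exact hlt)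
    have hrT : rr * T ≠ ⊤ := ENNReal.mul_ne_top hrne hTne
    have hTexp : T = rr + rr * T := by
      conv_lhs => rw [hTrec, ← hreq]
      rw [mul_add, mul_one]
    have hvT : v * T = rr := by
      rw [hveq, ENNReal.sub_mul (fun _ _ => hTne), one_mul]
      nth_rewrite 1 [hTexp]
      exact ENNReal.add_sub_cancel_right hrT
    have hkey : (1 + T) * v = 1 := by
      rw [add_mul, one_mul, mul_comm T v, hvT, add_comm]
      exact htri
    have hinv : (1 + T) = v⁻¹ := by
      calc (1 + T) = (1 + T) * (v * v⁻¹) := by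
            rw [ENNReal.mul_inv_cancel hvne0 hvnetop, mul_one]
        _ = ((1 + T) * v) * v⁻¹ := by rw [mul_assoc]
        _ = v⁻¹ := by rw [hkey, one_mul]
    rw [hG, ← hueq, hinv, div_eq_mul_inv]
  · -- rr = 1
    have hv0 : v = 0 := by
      have h1 := htri
      rw [heq] at h1
      refine (ENNReal.add_right_inj ENNReal.one_ne_top).mp ?_
      rw [add_zero]
      exact h1
    have hTtop : T = ⊤ := by
      by_contra hne
      have h1 : T = 1 + T := by
        conv_lhs => rw [hTrec, ← hreq, heq, one_mul]
      have h2 : T < T + 1 := ENNReal.lt_add_right hne one_ne_zero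
      rw [add_comm] at h2
      exact absurd h1 (ne_of_lt h2)
    by_cases hu0 : u = 0
    · rw [hG, ← hueq, hu0, zero_mul, hv0]
      simp
    · rw [hG, ← hueq, hTtop, hv0, ENNReal.div_zero hu0]
      have htop1 : (1 : ℝ≥0∞) + ⊤ = ⊤ := by simp
      rw [htop1, ENNReal.mul_top hu0]

end MCaux

/-- For an irreducible recurrent chain, `A ⊂ S`, `x ∈ S`, `y ∈ A`:
`P^x(X_{τ⁺_A} = y) = p(x,y) + Σ_{z ∉ A} [P^x(τ⁺_z < τ⁺_A)/P^z(τ⁺_A < τ⁺_z)] p(z,y)`. -/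
theorem statement4 [Countable S] (M : MC S) (hirr : MCIrreducible M)
    (hrec : MCRecurrent M) (A : Set S) (x : S) (y : S) (hy : y ∈ A) :
    M.P x (hitAtP A y)
      = M.p x y + ∑' z : ↥Aᶜ,
          (M.P x {ω | tauP {(z : S)} ω < tauP A ω}
            / M.P (z : S) {ω | tauP A ω < tauP {(z : S)} ω}) * M.p z y := by
  classical
  have hm := MCaux.discrete_of_recurrent M hrec
  rw [MCaux.measure_hit_eq M hm hy x, MCaux.SumTo_split_last M x y (fun s => s ∉ A)]
  congr 1
  refine Eq.trans (tsum_congr fun b => ?_) (tsum_subtype (Aᶜ : Set S)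
    (fun c => (M.P x {ω | tauP {c} ω < tauP A ω}
      / M.P c {ω | tauP A ω < tauP {c} ω}) * M.p c y)).symm
  by_cases hb : b ∈ A
  · have h1 : ¬ (b ∉ A) := fun h => h hb
    have h2 : b ∉ (Aᶜ : Set S) := fun h => h hb
    simp [h1, Set.indicator, h2]
  · have h2 : b ∈ (Aᶜ : Set S) := hb
    simp only [Set.indicator, h2, if_pos, hb, not_false_iff, ite_true]
    rw [MCaux.G_eq_div M hm hrec hb x]
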